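/- Let p ≥ 3 be prime and n = p²q. For the input X₁ ∈ {0,1}^n with x_i = 1 iff i ≡ p−1 (mod p), the sensitivity of the simplified weighted sum function f at X₁ is 0: flipping any single coordinate of X₁ does not change the value of f. -/

import Mathlib

open Finset

/-- the weighted sum `s(X) = (∑ k, k·x_k) mod n`, as an element of `ZMod n`. -/
def wsS {n : ℕ} [NeZero n] (X : ZMod n → Bool) : ZMod n :=
  ∑ i : ZMod n, if X i then i else 0

/-- the simplified weighted sum function `f(X) = x_{s(X)}`. -/
def wsF {n : ℕ} [NeZero n] (X : ZMod n → Bool) : Bool := X (wsS X)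

/-- the sensitivity `Sen(f, X)`: the number of coordinates whose flip changes `f`. -/
def wsSens {n : ℕ} [NeZero n] (X : ZMod n → Bool) : ℕ :=
  (Finset.univ.filter fun i : ZMod n =>
    wsF (Function.update X i (!X i)) ≠ wsF X).card

lemma ws_aux_step (p : ℕ) (hp : 0 < p) (m : ℕ) :
    (∑ k ∈ Finset.range (p * (m + 1)), if k % p = p - 1 then k else 0)
      = (∑ k ∈ Finset.range (p * m), if k % p = p - 1 then k else 0) + (p * m + (p - 1)) := by
  rw [Nat.mul_succ, Finset.sum_range_add]
  congr 1
  have hcong : ∀ t ∈ Finset.range p, (if (p * m + t) % p = p - 1 then p * m + t else 0)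
      = if t = p - 1 then p * m + t else 0 := by
    intro t ht
    rw [Finset.mem_range] at ht
    rw [Nat.mul_add_mod, Nat.mod_eq_of_lt ht]
  rw [Finset.sum_congr rfl hcong, Finset.sum_ite_eq' (Finset.range p) (p - 1)]
  have : p - 1 ∈ Finset.range p := Finset.mem_range.mpr (by omega)
  simp [this]

lemma ws_aux_closed (p : ℕ) (hp : 0 < p) : ∀ m : ℕ,
    2 * (∑ k ∈ Finset.range (p * m), if k % p = p - 1 then k else 0) + p * m
      = 2 * m * (p - 1) + p * m * m := by
  obtain ⟨r, rfl⟩ : ∃ r, p = r + 1 := ⟨p - 1, by omega⟩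
  intro m
  induction m with
  | zero => simp
  | succ m ih =>
    rw [ws_aux_step (r + 1) hp m]
    simp only [Nat.add_sub_cancel] at ih ⊢
    ring_nf at ih ⊢
    linarith

theorem stmt_3 (p q n : ℕ) (hp : p.Prime) (hp3 : 3 ≤ p) (hq : 0 < q)
    (hn : n = p ^ 2 * q) [NeZero n] :
    wsSens (fun i : ZMod n => decide (i.val % p = p - 1)) = 0 := by
  have hp0 : 0 < p := by omega
  haveI : NeZero p := ⟨by omega⟩
  haveI : Fact (1 < p) := ⟨by omega⟩
  have hdvd : p ∣ n := ⟨p * q, by rw [hn]; ring⟩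
  set X : ZMod n → Bool := fun i => decide (i.val % p = p - 1) with hX
  set T : ℕ := ∑ k ∈ Finset.range n, if k % p = p - 1 then k else 0 with hT
  have hnm : n = p * (p * q) := by rw [hn]; ring
  have hclosed : 2 * T + p * (p * q)
      = 2 * (p * q) * (p - 1) + p * (p * q) * (p * q) := by
    rw [hT, hnm]; exact ws_aux_closed p hp0 (p * q)
  -- p divides T
  have hpT : p ∣ T := by
    have h1 : p ∣ 2 * (p * q) * (p - 1) + p * (p * q) * (p * q) :=
      ⟨2 * q * (p - 1) + (p * q) * (p * q), by ring⟩
    have h2 : p ∣ p * (p * q) := ⟨p * q, rfl⟩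
    have h3 : p ∣ 2 * T := by
      have := Nat.dvd_sub h1 h2
      have heq : 2 * (p * q) * (p - 1) + p * (p * q) * (p * q) - p * (p * q) = 2 * T := by
        omega
      rwa [heq] at this
    have hcop : Nat.Coprime p 2 := by
      rw [Nat.Prime.coprime_iff_not_dvd hp]
      intro h
      have := Nat.le_of_dvd (by norm_num) h
      omega
    exact hcop.dvd_of_dvd_mul_left h3
  -- n does not divide T
  have hnT : ¬ n ∣ T := by
    rintro ⟨c, hc⟩
    have key : p * q * (2 * (p * c) + p) = p * q * (2 * (p - 1) + p * (p * q)) := by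
      calc p * q * (2 * (p * c) + p) = 2 * (p ^ 2 * q * c) + p * (p * q) := by ring
        _ = 2 * (p * q) * (p - 1) + p * (p * q) * (p * q) := by
            rw [← hn, ← hc]; exact hclosed
        _ = p * q * (2 * (p - 1) + p * (p * q)) := by ring
    have hcancel : 2 * (p * c) + p = 2 * (p - 1) + p * (p * q) :=
      Nat.eq_of_mul_eq_mul_left (by positivity) key
    have h1 : p ∣ 2 * (p * c) + p := ⟨2 * c + 1, by ring⟩
    have h2 : p ∣ p * (p * q) := ⟨p * q, rfl⟩
    have h3 : p ∣ 2 * (p - 1) := by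
      have := Nat.dvd_sub h1 h2
      rwa [hcancel, Nat.add_sub_cancel] at this
    rcases (Nat.Prime.dvd_mul hp).mp h3 with h | h
    · have := Nat.le_of_dvd (by norm_num) h; omega
    · have := Nat.le_of_dvd (by omega) h; omega
  -- transfer lemma for sums
  have htrans : ∀ g : ZMod n → ZMod n,
      ∑ i : ZMod n, g i = ∑ k ∈ Finset.range n, g (k : ZMod n) := by
    intro g
    apply Finset.sum_nbij' (fun a : ZMod n => a.val) (fun k : ℕ => (k : ZMod n))
    · intro a _
      exact Finset.mem_range.mpr (ZMod.val_lt a)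
    · intro a _
      exact Finset.mem_univ _
    · intro a _
      exact ZMod.natCast_zmod_val a
    · intro a ha
      exact ZMod.val_natCast_of_lt (Finset.mem_range.mp ha)
    · intro a _
      rw [ZMod.natCast_zmod_val a]
  -- wsS X = T
  have hsum : wsS X = (T : ZMod n) := by
    rw [wsS, htrans, hT, Nat.cast_sum]
    apply Finset.sum_congr rfl
    intro k hk
    have h1 : ((k : ZMod n)).val = k := ZMod.val_natCast_of_lt (Finset.mem_range.mp hk)
    simp only [hX, h1]
    by_cases h : k % p = p - 1 <;> simp [h]
  -- the mod-p reduction homomorphism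
  set φ : ZMod n →+* ZMod p := ZMod.castHom hdvd (ZMod p) with hφ
  have hval : ∀ z : ZMod n, z.val % p = (φ z).val := by
    intro z
    rw [hφ, ZMod.castHom_apply, ← ZMod.natCast_val, ZMod.val_natCast]
  have hφs : φ (wsS X) = 0 := by
    rw [hsum, map_natCast, ZMod.natCast_eq_zero_iff]
    exact hpT
  have hs0 : wsS X ≠ 0 := by
    rw [hsum, Ne, ZMod.natCast_eq_zero_iff]
    exact hnT
  -- f(X) = false
  have hfX : wsF X = false := by
    rw [wsF]
    simp only [hX]
    rw [hval, hφs]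
    simp only [ZMod.val_zero, decide_eq_false_iff_not]
    omega
  -- update lemma
  have hupd : ∀ (i : ZMod n) (b : Bool),
      wsS (Function.update X i b)
        = wsS X - (if X i then i else 0) + (if b then i else 0) := by
    intro i b
    have hfun : (fun j => if Function.update X i b j then (j : ZMod n) else 0)
        = Function.update (fun j => if X j then (j : ZMod n) else 0) i
            (if b then (i : ZMod n) else 0) := by
      funext j
      by_cases hji : j = i
      · subst hji; simp
      · simp [Function.update_of_ne hji]
    rw [wsS, hfun, Finset.sum_update_of_mem (Finset.mem_univ i)]
    rw [show (wsS X : ZMod n) = (if X i then (i : ZMod n) else 0)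
        + ∑ j ∈ Finset.univ.erase i, (if X j then (j : ZMod n) else 0) from
      (Finset.add_sum_erase _ _ (Finset.mem_univ i)).symm]
    rw [Finset.sdiff_singleton_eq_erase]
    ring
  -- main computation
  rw [wsSens, Finset.card_eq_zero, Finset.filter_eq_empty_iff]
  intro i _
  simp only [ne_eq, not_not]
  rw [hfX]
  cases hXi : X i with
  | true =>
    have hiv : i.val % p = p - 1 := by
      have := hXi
      simp only [hX, decide_eq_true_eq] at this
      exact this
    have hφi : φ i = ((p - 1 : ℕ) : ZMod p) := by
      have : φ i = ((i.val : ℕ) : ZMod p) := by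
        rw [hφ, ZMod.castHom_apply, ← ZMod.natCast_val]
      rw [this, ← ZMod.natCast_mod, hiv]
    have hneg : ((p - 1 : ℕ) : ZMod p) = -1 := by
      rw [Nat.cast_sub (by omega : 1 ≤ p), ZMod.natCast_self, Nat.cast_one, zero_sub]
    have hs' : wsS (Function.update X i false) = wsS X - i := by
      rw [hupd]; simp [hXi]
    have hφs' : φ (wsS (Function.update X i false)) = 1 := by
      rw [hs', map_sub, hφs, hφi, hneg]
      ring
    rw [Bool.not_true, wsF]
    by_cases hsi : wsS (Function.update X i false) = i
    · rw [hsi, Function.update_self]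
    · rw [Function.update_of_ne hsi]
      simp only [hX, decide_eq_false_iff_not]
      rw [hval, hφs', ZMod.val_one]
      omega
  | false =>
    have hiv : ¬ (i.val % p = p - 1) := by
      have := hXi
      simp only [hX, decide_eq_false_iff_not] at this
      exact this
    have hs' : wsS (Function.update X i true) = wsS X + i := by
      rw [hupd]; simp [hXi]
    have hsi : wsS (Function.update X i true) ≠ i := by
      rw [hs']
      intro h
      exact hs0 (by rwa [add_eq_right] at h)
    rw [Bool.not_false, wsF, Function.update_of_ne hsi]
    simp only [hX, decide_eq_false_iff_not]
    rw [hval, hs', map_add, hφs, zero_add, ← hval]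
    exact hiv
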